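/- In the completion K_∞ (with |θ| = q), the sequence b_{e+1}(t)/ℓ_e converges in the Tate algebra 𝕋, uniformly on the closed unit disc, to −π̃/ω(t), where π̃ = ι·θ·∏_{j≥1}(1 − θ^{1−q^j})^{-1} and ω(t) = ι ∏_{j≥0}(1 − t θ^{-q^j})^{-1}. -/

import Mathlib

noncomputable section
open Polynomial Filter

set_option linter.unusedSectionVars false

namespace BAux
variable {K : Type*} [NontriviallyNormedField K] [IsUltrametricDist K]

lemma coeff_one_sub_CX_norm_le (b : K) (hb : ‖b‖ ≤ 1) (n : ℕ) :
    ‖PowerSeries.coeff n (1 - PowerSeries.C b * PowerSeries.X)‖ ≤ 1 := by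
  rw [map_sub, PowerSeries.coeff_one, PowerSeries.coeff_C_mul, PowerSeries.coeff_X]
  by_cases h0 : n = 0
  · simp [h0]
  by_cases h1 : n = 1
  · simp [h0, h1, hb]
  · simp [h0, h1]

lemma coeff_prod_norm_le (b : ℕ → K) (hb : ∀ j, ‖b j‖ ≤ 1) (N : ℕ) (n : ℕ) :
    ‖PowerSeries.coeff n
      (∏ j ∈ Finset.range N, (1 - PowerSeries.C (b j) * PowerSeries.X))‖ ≤ 1 := by
  induction N generalizing n with
  | zero =>
      simp only [Finset.range_zero, Finset.prod_empty, PowerSeries.coeff_one]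
      split <;> simp
  | succ N ih =>
      rw [Finset.prod_range_succ, PowerSeries.coeff_mul]
      refine IsUltrametricDist.norm_sum_le_of_forall_le_of_nonneg zero_le_one ?_
      intro p _
      rw [norm_mul]
      exact mul_le_one₀ (ih _) (norm_nonneg _) (coeff_one_sub_CX_norm_le _ (hb N) _)

lemma factor_eq {K : Type*} [Field K] (a : K) (ha : a ≠ 0) :
    ((X - C a : Polynomial K) : PowerSeries K)
      = PowerSeries.C (-a) * (1 - PowerSeries.C a⁻¹ * PowerSeries.X) := by
  rw [Polynomial.coe_sub, Polynomial.coe_X, Polynomial.coe_C,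
    mul_sub, mul_one, ← mul_assoc, ← map_mul]
  have h : -a * a⁻¹ = -1 := by field_simp
  rw [h]
  simp only [map_neg, map_one]
  ring

end BAux

variable (Fq : Type) [Field Fq] [Fintype Fq]
variable (Cinf : Type) [NontriviallyNormedField Cinf] [CompleteSpace Cinf]
  [IsAlgClosed Cinf] [IsUltrametricDist Cinf] [Algebra Fq Cinf]

/-- `b_e(t) = ∏_{j=0}^{e-1} (t - θ^{q^j})`, as a polynomial over `ℂ_∞`. -/
def bCpoly (θc : Cinf) (e : ℕ) : Polynomial Cinf :=
  ∏ j ∈ Finset.range e, (X - C (θc ^ (Fintype.card Fq) ^ j))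

/-- `ℓ_e = ∏_{j=1}^{e} (θ - θ^{q^j}) ∈ ℂ_∞`. -/
def lC (θc : Cinf) (e : ℕ) : Cinf :=
  ∏ j ∈ Finset.Icc 1 e, (θc - θc ^ (Fintype.card Fq) ^ j)

/-- Convergence of a sequence of power series in the Gauss norm. -/
def GaussTendsto (F : ℕ → PowerSeries Cinf) (φ : PowerSeries Cinf) : Prop :=
  ∀ ε > (0 : ℝ), ∃ N, ∀ m ≥ N, ∀ n : ℕ, ‖PowerSeries.coeff n (F m - φ)‖ < ε

/-- The `N`-th partial product `(-π̃ ι⁻¹) ∏_{j<N} (1 - t/θ^{q^j})` of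
`-π̃/ω(t) = -π̃ ι⁻¹ ∏_{j≥0}(1 - t θ^{-q^j})`. -/
def negPiOverOmegaPartial (θc ι πt : Cinf) (N : ℕ) : PowerSeries Cinf :=
  PowerSeries.C (-πt * ι⁻¹) *
    ∏ j ∈ Finset.range N,
      (1 - PowerSeries.C ((θc ^ (Fintype.card Fq) ^ j)⁻¹) * PowerSeries.X)

/-- In the Tate algebra `𝕋` (uniformly on the closed unit disc, i.e. for the
Gauss norm), `b_{e+1}(t)/ℓ_e → -π̃/ω(t)` as `e → ∞`, where
`π̃ = ι θ ∏_{j≥1}(1 - θ^{1-q^j})⁻¹` is the Carlitz period and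
`ω(t) = ι ∏_{j≥0}(1 - t θ^{-q^j})⁻¹` the Anderson–Thakur function. -/
theorem bCpoly_div_l_tendsto (θc : Cinf) (hθ : ‖θc‖ = (Fintype.card Fq : ℝ))
    (ι : Cinf) (hι : ι ^ (Fintype.card Fq - 1) + θc = 0)
    (πt : Cinf)
    (hπ : Tendsto (fun N => ι * θc *
        ∏ j ∈ Finset.Icc 1 N, (1 - θc ^ ((1 : ℤ) - (Fintype.card Fq : ℤ) ^ j))⁻¹)
      atTop (nhds πt))
    (ψ : PowerSeries Cinf)
    (hψ : GaussTendsto Cinf (negPiOverOmegaPartial Fq Cinf θc ι πt) ψ) :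
    GaussTendsto Cinf
      (fun e => PowerSeries.C (lC Fq Cinf θc e)⁻¹ *
        ((bCpoly Fq Cinf θc (e + 1) : Polynomial Cinf) : PowerSeries Cinf)) ψ := by
  classical
  set q := Fintype.card Fq with hqdef
  have hq1 : 1 < q := Fintype.one_lt_card
  have hq1R : (1 : ℝ) < q := by exact_mod_cast hq1
  have hθnorm : (1 : ℝ) < ‖θc‖ := by rw [hθ]; exact hq1R
  have hθ0 : θc ≠ 0 := by
    intro h; rw [h, norm_zero] at hθnorm; linarith
  have ha0 : ∀ j : ℕ, θc ^ q ^ j ≠ 0 := fun j => pow_ne_zero _ hθ0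
  have hι0 : ι ≠ 0 := by
    intro h
    rw [h, zero_pow (by omega), zero_add] at hι
    exact hθ0 hι
  have hιnorm : (0 : ℝ) < ‖ι‖ := norm_pos_iff.mpr hι0
  -- the sequence of scalar factors
  set p : ℕ → Cinf := fun N => ι * θc *
      ∏ j ∈ Finset.Icc 1 N, (1 - θc ^ ((1 : ℤ) - (q : ℤ) ^ j))⁻¹ with hpdef
  set c : ℕ → Cinf := fun e => -(p e) * ι⁻¹ with hcdef
  -- norm bounds on the inverse powers
  have hbnorm : ∀ j : ℕ, ‖(θc ^ q ^ j)⁻¹‖ ≤ 1 := by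
    intro j
    rw [norm_inv, norm_pow]
    rw [inv_le_one_iff₀]
    right
    exact one_le_pow₀ hθnorm.le
  -- zpow rewriting
  have hzp : ∀ j : ℕ, θc ^ ((q : ℤ) ^ j) = θc ^ (q ^ j) := by
    intro j
    rw [show ((q : ℤ) ^ j) = ((q ^ j : ℕ) : ℤ) by push_cast; ring, zpow_natCast]
  -- factor identity in scalars
  have hsplit : ∀ j : ℕ, θc - θc ^ q ^ j
      = (-(θc ^ q ^ j)) * (1 - θc ^ ((1 : ℤ) - (q : ℤ) ^ j)) := by
    intro j
    have h2 : θc ^ q ^ j * θc ^ ((1 : ℤ) - (q : ℤ) ^ j) = θc := by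
      rw [← hzp, ← zpow_add₀ hθ0]
      norm_num
    linear_combination -h2
  -- key scalar identity
  have hscalar : ∀ e : ℕ,
      (lC Fq Cinf θc e)⁻¹ * ∏ j ∈ Finset.range (e + 1), (-(θc ^ q ^ j)) = c e := by
    intro e
    have hA : (∏ j ∈ Finset.Icc 1 e, (-(θc ^ q ^ j))) ≠ 0 :=
      Finset.prod_ne_zero_iff.mpr fun j _ => neg_ne_zero.mpr (ha0 j)
    have hlC : lC Fq Cinf θc e
        = (∏ j ∈ Finset.Icc 1 e, (-(θc ^ q ^ j))) *
          ∏ j ∈ Finset.Icc 1 e, (1 - θc ^ ((1 : ℤ) - (q : ℤ) ^ j)) := by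
      rw [lC, ← Finset.prod_mul_distrib]
      exact Finset.prod_congr rfl fun j _ => hsplit j
    have hrange : ∏ j ∈ Finset.range (e + 1), (-(θc ^ q ^ j))
        = (-(θc ^ q ^ 0)) * ∏ j ∈ Finset.Icc 1 e, (-(θc ^ q ^ j)) := by
      rw [Finset.range_eq_Ico, Finset.prod_eq_prod_Ico_succ_bot (Nat.succ_pos e),
        ← Finset.Ico_add_one_right_eq_Icc]
      rfl
    rw [hlC, hrange, hcdef]
    simp only [hpdef]
    rw [Finset.prod_inv_distrib, mul_inv, pow_zero, pow_one]
    have hAc : (∏ j ∈ Finset.Icc 1 e, -θc ^ q ^ j)⁻¹ *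
        (∏ j ∈ Finset.Icc 1 e, -θc ^ q ^ j) = 1 := inv_mul_cancel₀ hA
    have hιc : ι * ι⁻¹ = 1 := mul_inv_cancel₀ hι0
    set B := ∏ j ∈ Finset.Icc 1 e, (1 - θc ^ ((1 : ℤ) - (q : ℤ) ^ j)) with hB
    linear_combination (-θc * B⁻¹) * hAc + (θc * B⁻¹) * hιc
  -- key power-series identity
  have hkey : ∀ e : ℕ,
      PowerSeries.C (lC Fq Cinf θc e)⁻¹ *
        ((bCpoly Fq Cinf θc (e + 1) : Polynomial Cinf) : PowerSeries Cinf)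
      = PowerSeries.C (c e) *
          ∏ j ∈ Finset.range (e + 1),
            (1 - PowerSeries.C ((θc ^ q ^ j)⁻¹) * PowerSeries.X) := by
    intro e
    have hb : ((bCpoly Fq Cinf θc (e + 1) : Polynomial Cinf) : PowerSeries Cinf)
        = PowerSeries.C (∏ j ∈ Finset.range (e + 1), (-(θc ^ q ^ j))) *
          ∏ j ∈ Finset.range (e + 1),
            (1 - PowerSeries.C ((θc ^ q ^ j)⁻¹) * PowerSeries.X) := by
      rw [bCpoly, ← Polynomial.coeToPowerSeries.ringHom_apply, map_prod]
      rw [map_prod PowerSeries.C, ← Finset.prod_mul_distrib]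
      refine Finset.prod_congr rfl fun j _ => ?_
      rw [Polynomial.coeToPowerSeries.ringHom_apply]
      exact BAux.factor_eq _ (ha0 j)
    rw [hb, ← mul_assoc, ← map_mul, hscalar e]
  -- quantitative estimate
  intro ε hε
  obtain ⟨N₁, hN₁⟩ := hψ (ε / 2) (by positivity)
  obtain ⟨N₂, hN₂⟩ := (Metric.tendsto_atTop.mp hπ) (ε / 2 * ‖ι‖) (by positivity)
  refine ⟨max N₁ N₂, fun e he n => ?_⟩
  have he1 : N₁ ≤ e := le_trans (le_max_left _ _) he
  have he2 : N₂ ≤ e := le_trans (le_max_right _ _) he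
  have h2 : ‖PowerSeries.coeff n
      (negPiOverOmegaPartial Fq Cinf θc ι πt (e + 1) - ψ)‖ < ε / 2 :=
    hN₁ (e + 1) (by omega) n
  have h1 : ‖PowerSeries.coeff n
      (PowerSeries.C (lC Fq Cinf θc e)⁻¹ *
        ((bCpoly Fq Cinf θc (e + 1) : Polynomial Cinf) : PowerSeries Cinf)
        - negPiOverOmegaPartial Fq Cinf θc ι πt (e + 1))‖ < ε / 2 := by
    have hdiff : PowerSeries.C (lC Fq Cinf θc e)⁻¹ *
        ((bCpoly Fq Cinf θc (e + 1) : Polynomial Cinf) : PowerSeries Cinf)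
        - negPiOverOmegaPartial Fq Cinf θc ι πt (e + 1)
        = PowerSeries.C (c e - (-πt * ι⁻¹)) *
          ∏ j ∈ Finset.range (e + 1),
            (1 - PowerSeries.C ((θc ^ q ^ j)⁻¹) * PowerSeries.X) := by
      rw [hkey e, negPiOverOmegaPartial, map_sub, sub_mul]
    rw [hdiff, PowerSeries.coeff_C_mul, norm_mul]
    have hc : ‖c e - (-πt * ι⁻¹)‖ < ε / 2 := by
      have : c e - (-πt * ι⁻¹) = (πt - p e) * ι⁻¹ := by
        simp only [hcdef]; ring
      rw [this, norm_mul, norm_inv, ← div_eq_mul_inv, div_lt_iff₀ hιnorm]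
      have := hN₂ e he2
      rw [dist_eq_norm] at this
      calc ‖πt - p e‖ = ‖p e - πt‖ := by rw [norm_sub_rev]
        _ < ε / 2 * ‖ι‖ := this
    calc ‖c e - (-πt * ι⁻¹)‖ * ‖_‖ ≤ ‖c e - (-πt * ι⁻¹)‖ * 1 := by
          exact mul_le_mul_of_nonneg_left
            (BAux.coeff_prod_norm_le (fun j => (θc ^ q ^ j)⁻¹) hbnorm (e + 1) n)
            (norm_nonneg _)
      _ = ‖c e - (-πt * ι⁻¹)‖ := mul_one _
      _ < ε / 2 := hc
  have hsum : (PowerSeries.C (lC Fq Cinf θc e)⁻¹ *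
        ((bCpoly Fq Cinf θc (e + 1) : Polynomial Cinf) : PowerSeries Cinf)) - ψ
      = (PowerSeries.C (lC Fq Cinf θc e)⁻¹ *
        ((bCpoly Fq Cinf θc (e + 1) : Polynomial Cinf) : PowerSeries Cinf)
        - negPiOverOmegaPartial Fq Cinf θc ι πt (e + 1))
        + (negPiOverOmegaPartial Fq Cinf θc ι πt (e + 1) - ψ) := by ring
  calc ‖PowerSeries.coeff n _‖ = ‖PowerSeries.coeff n _ + PowerSeries.coeff n _‖ := by
        rw [hsum, map_add]
    _ ≤ ‖PowerSeries.coeff n _‖ + ‖PowerSeries.coeff n _‖ := norm_add_le _ _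
    _ < ε / 2 + ε / 2 := add_lt_add h1 h2
    _ = ε := by ring
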